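/- Let λ > 0 and let (p_n)_{n≥1} with p_0 = 0 and p_1 > 0 satisfy the recurrence -λ p_n = (n-1)(n-1/2) p_{n-1} - n(n+1/2) p_{n+1} for all n ≥ 1. Then the limits lim_{n→∞} (2n+1) p_{2n+1} and lim_{n→∞} (2n) p_{2n} exist, are finite, and are strictly positive. -/

import Mathlib

open Filter

private lemma conv_aux17 (y : ℕ → ℝ) (C : ℝ)
    (hy : ∀ k : ℕ, |y (k+1) - y k| ≤ C / ((k:ℝ)+1)^2) :
    ∃ L : ℝ, Tendsto y atTop (nhds L) := by
  have hsum : Summable (fun k : ℕ => y (k+1) - y k) := by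
    apply Summable.of_norm_bounded (g := fun k : ℕ => C / ((k:ℝ)+1)^2) _ (fun k => by
      simpa using hy k)
    have h1 : Summable (fun k : ℕ => 1 / ((k:ℝ))^2) :=
      Real.summable_one_div_nat_pow.mpr one_lt_two
    have h2 : Summable (fun k : ℕ => 1 / (((k:ℕ):ℝ)+1)^2) := by
      have h3 := (summable_nat_add_iff 1).mpr h1
      refine h3.congr fun k => ?_
      push_cast
      ring
    have h4 := h2.mul_left C
    refine h4.congr fun k => ?_
    rw [mul_one_div]
  obtain ⟨S, hS⟩ := hsum
  refine ⟨y 0 + S, ?_⟩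
  have h3 := hS.tendsto_sum_nat
  have h4 : Tendsto (fun n => y 0 + ∑ i ∈ Finset.range n, (y (i+1) - y i))
      atTop (nhds (y 0 + S)) := tendsto_const_nhds.add h3
  refine h4.congr fun n => ?_
  rw [Finset.sum_range_sub]
  ring


set_option maxHeartbeats 2000000 in
/-- Let `λ > 0` and let `(p_n)` with `p_0 = 0`, `p_1 > 0` satisfy
`-λ p_n = (n-1)(n-1/2) p_{n-1} - n(n+1/2) p_{n+1}` for all `n ≥ 1`. Then the
limits `lim (2n+1) p_{2n+1}` and `lim (2n) p_{2n}` exist, are finite, and are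
strictly positive. -/
theorem stmt17 (lam : ℝ) (hlam : 0 < lam) (p : ℕ → ℝ)
    (hp0 : p 0 = 0) (hp1 : 0 < p 1)
    (hrec : ∀ n : ℕ, 1 ≤ n →
      -lam * p n = ((n : ℝ) - 1) * ((n : ℝ) - 1 / 2) * p (n - 1)
        - (n : ℝ) * ((n : ℝ) + 1 / 2) * p (n + 1)) :
    ∃ c₁ c₂ : ℝ, 0 < c₁ ∧ 0 < c₂ ∧
      Filter.Tendsto (fun n : ℕ => (2 * (n : ℝ) + 1) * p (2 * n + 1))
        Filter.atTop (nhds c₁) ∧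
      Filter.Tendsto (fun n : ℕ => (2 * (n : ℝ)) * p (2 * n))
        Filter.atTop (nhds c₂) := by
  -- positivity of p (n+1)
  have hnn : ∀ n : ℕ, 0 ≤ p n ∧ 0 < p (n + 1) := by
    intro n
    induction n with
    | zero => exact ⟨hp0.ge, hp1⟩
    | succ n ih =>
      obtain ⟨h0, h1⟩ := ih
      refine ⟨h1.le, ?_⟩
      have h := hrec (n + 1) (by omega)
      simp only [Nat.add_sub_cancel] at h
      push_cast at h
      have hn : (0:ℝ) ≤ (n:ℝ) := Nat.cast_nonneg n
      have hA : (0:ℝ) < ((n:ℝ)+1) * ((n:ℝ)+3/2) := by positivity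
      have hpos : 0 < (((n:ℝ)+1) * ((n:ℝ)+3/2)) * p (n+2) := by
        nlinarith [mul_pos hlam h1,
          mul_nonneg (mul_nonneg hn (by linarith : (0:ℝ) ≤ (n:ℝ)+1/2)) h0]
      by_contra hcon
      push_neg at hcon
      nlinarith [hpos, hA, hcon]
  set x : ℕ → ℝ := fun n => ((n:ℝ)+1) * p (n+1) with hxdef
  have hx : ∀ n, 0 < x n := fun n => mul_pos (by positivity) (hnn n).2
  -- master recurrence for x
  have hX : ∀ n : ℕ, ((n:ℝ)+2)^2*((n:ℝ)+5/2) * x (n+2)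
      = lam*((n:ℝ)+3) * x (n+1) + ((n:ℝ)+2)*((n:ℝ)+3)*((n:ℝ)+3/2) * x n := by
    intro n
    have h := hrec (n+2) (by omega)
    simp only [show n + 2 - 1 = n + 1 by omega] at h
    push_cast at h
    simp only [hxdef]
    push_cast
    linear_combination (((n:ℝ)+2)*((n:ℝ)+3)) * h
  -- denominator-free upper step
  have key : ∀ n : ℕ, ((n:ℝ)+2)^2 * x (n+2) ≤ ((n:ℝ)+2)^2 * x n + 2*lam * x (n+1) := by
    intro n
    have h := hX n
    have h52 : (0:ℝ) < (n:ℝ)+5/2 := by positivity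
    nlinarith [mul_nonneg (mul_nonneg hlam.le (show (0:ℝ) ≤ (n:ℝ)+2 by positivity)) (hx (n+1)).le,
      mul_nonneg (show (0:ℝ) ≤ (n:ℝ)+2 by positivity) (hx n).le, hx (n+2), hx n, hx (n+1)]
  -- monotone lower envelope g
  obtain ⟨g, hgdef⟩ : ∃ g : ℕ → ℝ, ∀ n, g n = ((n:ℝ)+1)/((n:ℝ)+2) * x n :=
    ⟨_, fun n => rfl⟩
  have hgx : ∀ n, g n ≤ x n := by
    intro n
    rw [hgdef]
    have h1 : ((n:ℝ)+1)/((n:ℝ)+2) ≤ 1 := by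
      rw [div_le_one (by positivity)]; linarith
    nlinarith [hx n, h1]
  have hgpos : ∀ n, 0 < g n := by
    intro n
    rw [hgdef]
    exact mul_pos (by positivity) (hx n)
  have hgstep : ∀ n : ℕ, g n ≤ g (n+2) := by
    intro n
    rw [hgdef, hgdef]
    push_cast
    rw [div_mul_eq_mul_div, div_mul_eq_mul_div,
      div_le_div_iff₀ (by positivity) (by positivity)]
    nlinarith [hX n, mul_pos (show (0:ℝ) < (n:ℝ)+2 by positivity) (show (0:ℝ) < (n:ℝ)+5/2 by positivity),
      mul_nonneg (mul_nonneg hlam.le (show (0:ℝ) ≤ ((n:ℝ)+3)^2 by positivity)) (hx (n+1)).le,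
      mul_nonneg (mul_nonneg (show (0:ℝ) ≤ (n:ℝ) from Nat.cast_nonneg n) (show (0:ℝ) ≤ (n:ℝ)+2 by positivity)) (hx n).le,
      mul_nonneg (show (0:ℝ) ≤ (n:ℝ)+2 by positivity) (hx n).le,
      hx n, hx (n+1), hx (n+2)]
  have hgchain : ∀ m k : ℕ, g m ≤ g (m + 2*k) := by
    intro m k
    induction k with
    | zero => simp
    | succ k ih =>
      refine ih.trans ?_
      have := hgstep (m + 2*k)
      have e1 : m + 2*(k+1) = (m + 2*k) + 2 := by omega
      rw [e1]
      exact this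
  -- bound B_n = x n + x (n+1)
  have hB : ∀ n : ℕ, x (n+1) + x (n+2) ≤ (x n + x (n+1)) * (1 + 2*lam/((n:ℝ)+2)^2) := by
    intro n
    have h2 : (0:ℝ) < ((n:ℝ)+2)^2 := by positivity
    have hr : (x n + x (n+1)) * (1 + 2*lam/((n:ℝ)+2)^2)
        = ((x n + x (n+1)) * (((n:ℝ)+2)^2 + 2*lam)) / ((n:ℝ)+2)^2 := by
      field_simp
    rw [hr, le_div_iff₀ h2]
    nlinarith [key n, mul_nonneg hlam.le (hx n).le, mul_nonneg hlam.le (hx (n+1)).le]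
  have hBexp : ∀ n : ℕ, x n + x (n+1)
      ≤ (x 0 + x 1) * Real.exp (2*lam*(1 - 1/((n:ℝ)+1))) := by
    intro n
    induction n with
    | zero => norm_num
    | succ n ih =>
      have hsub : 1/((n:ℝ)+1) - 1/((n:ℝ)+2) = 1/(((n:ℝ)+1)*((n:ℝ)+2)) := by
        rw [div_sub_div _ _ (by positivity : ((n:ℝ)+1) ≠ 0) (by positivity : ((n:ℝ)+2) ≠ 0)]
        congr 1
        ring
      have hle : 2*lam/((n:ℝ)+2)^2 ≤ 2*lam*(1/((n:ℝ)+1) - 1/((n:ℝ)+2)) := by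
        rw [hsub, mul_one_div]
        apply div_le_div_of_nonneg_left (by linarith) (by positivity)
        nlinarith [Nat.cast_nonneg (α := ℝ) n]
      have hstep : (1:ℝ) + 2*lam/((n:ℝ)+2)^2
          ≤ Real.exp (2*lam*(1/((n:ℝ)+1) - 1/((n:ℝ)+2))) :=
        le_trans (by linarith) (Real.add_one_le_exp _)
      have hc1 : (0:ℝ) ≤ 1 + 2*lam/((n:ℝ)+2)^2 := by positivity
      have hxsum0 : (0:ℝ) ≤ x 0 + x 1 := by
        have := hx 0; have := hx 1; linarith
      have hmain : x (n+1) + x (n+2)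
          ≤ (x 0 + x 1) * Real.exp (2*lam*(1 - 1/((n:ℝ)+2))) := by
        calc x (n+1) + x (n+2)
            ≤ (x n + x (n+1)) * (1 + 2*lam/((n:ℝ)+2)^2) := hB n
          _ ≤ ((x 0 + x 1) * Real.exp (2*lam*(1 - 1/((n:ℝ)+1)))) * (1 + 2*lam/((n:ℝ)+2)^2) :=
              mul_le_mul_of_nonneg_right ih hc1
          _ ≤ ((x 0 + x 1) * Real.exp (2*lam*(1 - 1/((n:ℝ)+1))))
                * Real.exp (2*lam*(1/((n:ℝ)+1) - 1/((n:ℝ)+2))) := by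
              apply mul_le_mul_of_nonneg_left hstep
              exact mul_nonneg hxsum0 (Real.exp_nonneg _)
          _ = (x 0 + x 1) * Real.exp (2*lam*(1 - 1/((n:ℝ)+2))) := by
              rw [mul_assoc, ← Real.exp_add]
              congr 2
              ring
      refine hmain.trans (le_of_eq ?_)
      congr 3
      push_cast
      ring
  have hxsum : (0:ℝ) < x 0 + x 1 := by have := hx 0; have := hx 1; linarith
  set K := (x 0 + x 1) * Real.exp (2*lam) with hKdef
  have hKpos : 0 < K := mul_pos hxsum (Real.exp_pos _)
  have hK : ∀ n, x n ≤ K := by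
    intro n
    have h1 := hBexp n
    have h2 := (hx (n+1)).le
    have h3 : (x 0 + x 1) * Real.exp (2*lam*(1 - 1/((n:ℝ)+1))) ≤ K := by
      rw [hKdef]
      apply mul_le_mul_of_nonneg_left _ hxsum.le
      apply Real.exp_le_exp.mpr
      have h5 : (0:ℝ) ≤ 1/((n:ℝ)+1) := by positivity
      nlinarith [mul_nonneg hlam.le h5]
    linarith
  -- difference bound
  have hd : ∀ n : ℕ, |x (n+2) - x n| ≤ (1+2*lam)*K / ((n:ℝ)+2)^2 := by
    intro n
    have h2 : (0:ℝ) < ((n:ℝ)+2)^2 := by positivity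
    have h52 : (0:ℝ) < (n:ℝ)+5/2 := by positivity
    have hup2 : x (n+2) - x n ≤ (1+2*lam)*K / ((n:ℝ)+2)^2 := by
      rw [le_div_iff₀ h2]
      nlinarith [hX n, h52,
        mul_nonneg (mul_nonneg hlam.le (show (0:ℝ) ≤ (n:ℝ)+2 by positivity)) (hx (n+1)).le,
        mul_nonneg (mul_nonneg hlam.le h52.le) (sub_nonneg.mpr (hK (n+1))),
        mul_nonneg (show (0:ℝ) ≤ (n:ℝ)+2 by positivity) (hx n).le,
        mul_nonneg hKpos.le h52.le]
    have hlo2 : x n - x (n+2) ≤ (1+2*lam)*K / ((n:ℝ)+2)^2 := by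
      rw [le_div_iff₀ h2]
      nlinarith [hX n, h52,
        mul_nonneg (mul_nonneg hlam.le (show (0:ℝ) ≤ (n:ℝ)+3 by positivity)) (hx (n+1)).le,
        mul_nonneg (show (0:ℝ) ≤ (n:ℝ)+2 by positivity) (sub_nonneg.mpr (hK n)),
        mul_nonneg hKpos.le (show (0:ℝ) ≤ (n:ℝ) from Nat.cast_nonneg n),
        mul_nonneg (mul_nonneg hlam.le h52.le) hKpos.le, hKpos]
    rw [abs_le]
    constructor
    · linarith
    · exact hup2
  have hCnn : (0:ℝ) ≤ (1+2*lam)*K := mul_nonneg (by linarith) hKpos.le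
  -- convergence along each parity class
  have happly : ∀ m : ℕ, ∃ L, Tendsto (fun k : ℕ => x (m + 2*k)) atTop (nhds L) ∧ g m ≤ L := by
    intro m
    have hbound : ∀ k : ℕ, |(fun k : ℕ => x (m + 2*k)) (k+1) - (fun k : ℕ => x (m + 2*k)) k|
        ≤ (1+2*lam)*K / ((k:ℝ)+1)^2 := by
      intro k
      simp only
      have e1 : m + 2*(k+1) = (m + 2*k) + 2 := by omega
      rw [e1]
      refine (hd (m + 2*k)).trans ?_
      apply div_le_div_of_nonneg_left hCnn (by positivity)
      have h1 : ((k:ℝ)+1) ≤ ((m + 2*k : ℕ):ℝ)+2 := by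
        push_cast
        nlinarith [Nat.cast_nonneg (α := ℝ) m, Nat.cast_nonneg (α := ℝ) k]
      nlinarith [Nat.cast_nonneg (α := ℝ) m, Nat.cast_nonneg (α := ℝ) k, h1]
    obtain ⟨L, hL⟩ := conv_aux17 (fun k : ℕ => x (m + 2*k)) ((1+2*lam)*K) hbound
    refine ⟨L, hL, ge_of_tendsto' hL fun k => ?_⟩
    exact le_trans (hgchain m k) (hgx _)
  obtain ⟨c₁, hc₁, hgc₁⟩ := happly 0
  obtain ⟨c₂, hc₂, hgc₂⟩ := happly 1
  refine ⟨c₁, c₂, lt_of_lt_of_le (hgpos 0) hgc₁, lt_of_lt_of_le (hgpos 1) hgc₂, ?_, ?_⟩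
  · refine hc₁.congr fun k => ?_
    simp only [hxdef]
    push_cast
    ring_nf
  · have h1 : Tendsto (fun k : ℕ => (2 * ((k:ℝ)+1)) * p (2 * (k+1))) atTop (nhds c₂) := by
      refine hc₂.congr fun k => ?_
      simp only [hxdef]
      have e1 : 1 + 2*k + 1 = 2*(k+1) := by omega
      rw [e1]
      push_cast
      ring_nf
    have h2 := (tendsto_add_atTop_iff_nat (f := fun n : ℕ => (2 * (n : ℝ)) * p (2 * n)) (l := nhds c₂) 1).mp ?_
    · exact h2
    · refine h1.congr fun k => ?_
      push_cast
      ring_nf
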